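/- Sprinkling units lemma: Let R be a commutative ring and 𝒞 an R-linear preadditive category whose hom-modules are torsion-free over R (i.e. if r • m = 0 for a scalar r : R and a morphism m ≠ 0, then r = 0). An n-dimensional anticommutative cube in 𝒞 consists of objects X v for each vertex v : Fin n → Bool, together with, for each vertex v and each index i with v i = false, an edge morphism f_{v,i} : X v ⟶ X (v[i ↦ true]), such that every square anticommutes: for all i ≠ j with v i = v j = false, f_{v,i} followed by f_{v[i↦true],j} equals the negative of f_{v,j} followed by f_{v[j↦true],i}. Suppose (X, f) and (X, g) are two anticommutative cubes with identical objects such that each edge of g is a unit multiple of the corresponding edge of f, say g_{v,i} = u_{v,i} • f_{v,i} with u_{v,i} ∈ Rˣ, and suppose the composition of any two composable edges of f is nonzero. Then the two cubes are isomorphic via a map which multiplies each object by a unit: there exists a family of units ε : (Fin n → Bool) → Rˣ such that for every vertex v and every i with v i = false, (ε v) • g_{v,i} = (ε (v[i ↦ true])) • f_{v,i}; equivalently, the morphisms (ε v) • 𝟙_{X v} constitute an isomorphism from the cube (X, f) to the cube (X, g). -/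

import Mathlib

open CategoryTheory


section Aux

variable {R : Type*} [CommRing R] {n : ℕ}

/-- The restriction of `v` below index `j`. -/
def cubePre (v : Fin n → Bool) (j : Fin n) : Fin n → Bool :=
  fun k => v k && decide ((k : ℕ) < (j : ℕ))

/-- Product of units along the increasing path from the bottom vertex to `v`. -/
def cubeEps (U : (Fin n → Bool) → Fin n → Rˣ) (v : Fin n → Bool) : Rˣ :=
  ∏ j : Fin n, if v j = true then U (cubePre v j) j else 1

lemma cubePre_update (v : Fin n → Bool) (i j : Fin n) (b : Bool) (h : (j : ℕ) ≤ (i : ℕ)) :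
    cubePre (Function.update v i b) j = cubePre v j := by
  funext k
  by_cases hk : k = i
  · subst hk
    simp only [cubePre, Function.update_self]
    rw [decide_eq_false (by omega), Bool.and_false, Bool.and_false]
  · simp only [cubePre, Function.update_of_ne hk]

lemma cubePre_top (v : Fin n → Bool) (i : Fin n) (hi : v i = false)
    (htop : ∀ k : Fin n, (i : ℕ) < (k : ℕ) → v k = false) :
    cubePre v i = v := by
  funext k
  rcases lt_trichotomy (k : ℕ) (i : ℕ) with h | h | h
  · simp [cubePre, h]
  · have : k = i := Fin.ext h
    subst this
    simp [cubePre, hi]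
  · simp [cubePre, htop k h, Nat.lt_asymm h]

lemma cubeEps_update_top (U : (Fin n → Bool) → Fin n → Rˣ) (v : Fin n → Bool) (i : Fin n)
    (hi : v i = false) (htop : ∀ k : Fin n, (i : ℕ) < (k : ℕ) → v k = false) :
    cubeEps U (Function.update v i true) = cubeEps U v * U v i := by
  unfold cubeEps
  rw [← Finset.prod_erase_mul Finset.univ _ (Finset.mem_univ i),
    ← Finset.prod_erase_mul Finset.univ
      (fun j => if v j = true then U (cubePre v j) j else 1) (Finset.mem_univ i)]
  have hti : (if (Function.update v i true) i = true
      then U (cubePre (Function.update v i true) i) i else 1) = U v i := by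
    rw [if_pos (Function.update_self i true v),
      cubePre_update v i i true le_rfl, cubePre_top v i hi htop]
  rw [hti, if_neg (by simp [hi]), mul_one]
  congr 1
  apply Finset.prod_congr rfl
  intro j hj
  have hji : j ≠ i := Finset.ne_of_mem_erase hj
  rcases lt_trichotomy (j : ℕ) (i : ℕ) with h | h | h
  · rw [Function.update_of_ne hji, cubePre_update v i j true (le_of_lt h)]
  · exact absurd (Fin.ext h) hji
  · rw [Function.update_of_ne hji, htop j h]
    simp

lemma cubeEps_update (U : (Fin n → Bool) → Fin n → Rˣ)
    (hsq : ∀ (v : Fin n → Bool) (i j : Fin n), i ≠ j → v i = false → v j = false →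
      U v i * U (Function.update v i true) j = U v j * U (Function.update v j true) i)
    (v : Fin n → Bool) (i : Fin n) (hi : v i = false) :
    cubeEps U (Function.update v i true) = cubeEps U v * U v i := by
  suffices H : ∀ (k : ℕ) (v : Fin n → Bool), v i = false →
      (Finset.univ.filter (fun j : Fin n => (i : ℕ) < (j : ℕ) ∧ v j = true)).card ≤ k →
      cubeEps U (Function.update v i true) = cubeEps U v * U v i by
    exact H _ v hi le_rfl
  intro k
  induction k with
  | zero =>
    intro v hv hc
    have hS : Finset.univ.filter (fun j : Fin n => (i : ℕ) < (j : ℕ) ∧ v j = true) = ∅ :=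
      Finset.card_eq_zero.mp (Nat.le_zero.mp hc)
    apply cubeEps_update_top U v i hv
    intro m hm
    by_contra hmv
    have : m ∈ Finset.univ.filter (fun j : Fin n => (i : ℕ) < (j : ℕ) ∧ v j = true) := by
      simp only [Finset.mem_filter, Finset.mem_univ, true_and]
      exact ⟨hm, by simpa using hmv⟩
    rw [hS] at this
    exact absurd this (Finset.notMem_empty m)
  | succ k ih =>
    intro v hv hc
    set S := Finset.univ.filter (fun j : Fin n => (i : ℕ) < (j : ℕ) ∧ v j = true) with hSdef
    by_cases hS : S.Nonempty
    · set j := S.max' hS with hjdef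
      have hjS : j ∈ S := S.max'_mem hS
      obtain ⟨hij, hvj⟩ : (i : ℕ) < (j : ℕ) ∧ v j = true := by
        simpa [hSdef] using hjS
      have hijne : i ≠ j := fun h => absurd hij (by rw [h]; exact lt_irrefl _)
      have hmax : ∀ m : Fin n, (j : ℕ) < (m : ℕ) → v m = false := by
        intro m hm
        by_contra hmv
        have hmS : m ∈ S := by
          simp only [hSdef, Finset.mem_filter, Finset.mem_univ, true_and]
          exact ⟨by omega, by simpa using hmv⟩
        have hle : (m : ℕ) ≤ (j : ℕ) := S.le_max' m hmS
        omega
      set w := Function.update v j false with hwdef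
      have hwj : w j = false := Function.update_self j false v
      have hwi : w i = false := by rw [hwdef, Function.update_of_ne hijne]; exact hv
      have hvw : v = Function.update w j true := by
        funext m
        by_cases hm : m = j
        · subst hm; simp [hwdef, hvj]
        · simp [hwdef, Function.update_of_ne hm]
      have hwtop : ∀ m : Fin n, (j : ℕ) < (m : ℕ) → w m = false := by
        intro m hm
        rw [hwdef, Function.update_of_ne (fun h => absurd hm (by rw [h]; exact lt_irrefl _))]
        exact hmax m hm
      have hwitop : ∀ m : Fin n, (j : ℕ) < (m : ℕ) → (Function.update w i true) m = false := by
        intro m hm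
        rw [Function.update_of_ne (fun h => absurd (hij.trans hm) (by rw [h]; exact lt_irrefl _))]
        exact hwtop m hm
      have hwij : (Function.update w i true) j = false := by
        rw [Function.update_of_ne hijne.symm]; exact hwj
      have hcard : (Finset.univ.filter (fun m : Fin n => (i : ℕ) < (m : ℕ) ∧ w m = true)).card ≤ k := by
        have hsub : (Finset.univ.filter (fun m : Fin n => (i : ℕ) < (m : ℕ) ∧ w m = true)) ⊆ S.erase j := by
          intro m hm
          simp only [Finset.mem_filter, Finset.mem_univ, true_and] at hm
          obtain ⟨h1, h2⟩ := hm
          have hmj : m ≠ j := by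
            rintro rfl; rw [hwj] at h2; exact absurd h2 (by simp)
          refine Finset.mem_erase.mpr ⟨hmj, ?_⟩
          simp only [hSdef, Finset.mem_filter, Finset.mem_univ, true_and]
          refine ⟨h1, ?_⟩
          rw [hvw, Function.update_of_ne hmj]
          exact h2
        calc (Finset.univ.filter (fun m : Fin n => (i : ℕ) < (m : ℕ) ∧ w m = true)).card
            ≤ (S.erase j).card := Finset.card_le_card hsub
          _ = S.card - 1 := Finset.card_erase_of_mem hjS
          _ ≤ k := by omega
      have e1 : cubeEps U v = cubeEps U w * U w j := by
        rw [hvw]; exact cubeEps_update_top U w j hwj hwtop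
      have e2 : cubeEps U (Function.update w i true) = cubeEps U w * U w i := ih w hwi hcard
      have e3 : cubeEps U (Function.update (Function.update w i true) j true)
          = cubeEps U (Function.update w i true) * U (Function.update w i true) j :=
        cubeEps_update_top U _ j hwij hwitop
      have e4 : Function.update v i true = Function.update (Function.update w i true) j true := by
        rw [hvw, Function.update_comm hijne]
      rw [e4, e3, e2, e1, hvw, mul_assoc, mul_assoc, hsq w i j hijne hwi hwj]
    · rw [Finset.not_nonempty_iff_eq_empty] at hS
      apply cubeEps_update_top U v i hv
      intro m hm
      by_contra hmv
      have : m ∈ S := by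
        simp only [hSdef, Finset.mem_filter, Finset.mem_univ, true_and]
        exact ⟨hm, by simpa using hmv⟩
      rw [hS] at this
      exact absurd this (Finset.notMem_empty m)

end Aux

/-- An `n`-dimensional anticommutative cube in a preadditive category: objects `X v` for
each vertex `v : Fin n → Bool`, and for each vertex `v` and index `i` with `v i = false`
an edge morphism `f v i : X v ⟶ X (Function.update v i true)`, such that every square
anticommutes. -/
def IsAnticommutativeCube {𝒞 : Type*} [Category 𝒞] [Preadditive 𝒞] {n : ℕ}
    (X : (Fin n → Bool) → 𝒞)
    (f : ∀ (v : Fin n → Bool) (i : Fin n), v i = false →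
      (X v ⟶ X (Function.update v i true))) : Prop :=
  ∀ (v : Fin n → Bool) (i j : Fin n) (hij : i ≠ j) (hi : v i = false) (hj : v j = false),
    f v i hi ≫ f (Function.update v i true) j
        (by rw [Function.update_of_ne hij.symm]; exact hj) =
      -((f v j hj ≫ f (Function.update v j true) i
            (by rw [Function.update_of_ne hij]; exact hi)) ≫
          eqToHom (congrArg X (Function.update_comm hij.symm true true v)))

/-- **Sprinkling units.**  Let `𝒞` be an `R`-linear preadditive category with torsion-free
hom-modules.  If `(X, f)` and `(X, g)` are two anticommutative cubes with identical objects,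
each edge of `g` is a unit multiple of the corresponding edge of `f`, and the composition
of any two composable edges of `f` is nonzero, then the two cubes are isomorphic via a map
multiplying each object by a unit: there are units `ε v` with
`(ε v) • g v i = (ε (v[i ↦ true])) • f v i` for every edge. -/
theorem sprinkling_units
    {R : Type*} [CommRing R] {𝒞 : Type*} [Category 𝒞] [Preadditive 𝒞]
    [CategoryTheory.Linear R 𝒞]
    -- the hom-modules of `𝒞` are torsion-free over `R`:
    (htf : ∀ (Y Z : 𝒞) (r : R) (m : Y ⟶ Z), r • m = 0 → m ≠ 0 → r = 0)
    {n : ℕ} (X : (Fin n → Bool) → 𝒞)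
    (f g : ∀ (v : Fin n → Bool) (i : Fin n), v i = false →
      (X v ⟶ X (Function.update v i true)))
    (hf : IsAnticommutativeCube X f) (hg : IsAnticommutativeCube X g)
    -- each edge of `g` is a unit multiple of the corresponding edge of `f`:
    (u : ∀ (v : Fin n → Bool) (i : Fin n), v i = false → Rˣ)
    (hu : ∀ (v : Fin n → Bool) (i : Fin n) (hi : v i = false),
      g v i hi = (u v i hi : R) • f v i hi)
    -- the composition of any two composable edges of `f` is nonzero:
    (hnz : ∀ (v : Fin n → Bool) (i j : Fin n) (hij : i ≠ j)
      (hi : v i = false) (hj : v j = false),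
      f v i hi ≫ f (Function.update v i true) j
          (by rw [Function.update_of_ne hij.symm]; exact hj) ≠ 0) :
    ∃ ε : (Fin n → Bool) → Rˣ,
      ∀ (v : Fin n → Bool) (i : Fin n) (hi : v i = false),
        (ε v : R) • g v i hi = (ε (Function.update v i true) : R) • f v i hi := by
  classical
  set U : (Fin n → Bool) → Fin n → Rˣ :=
    fun v i => if h : v i = false then u v i h else 1 with hUdef
  have hUeq : ∀ (v : Fin n → Bool) (i : Fin n) (hi : v i = false), U v i = u v i hi :=
    fun v i hi => dif_pos hi
  have hsq : ∀ (v : Fin n → Bool) (i j : Fin n), i ≠ j → v i = false → v j = false →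
      U v i * U (Function.update v i true) j = U v j * U (Function.update v j true) i := by
    intro v i j hij hi hj
    have hj' : (Function.update v i true) j = false := by
      rw [Function.update_of_ne hij.symm]; exact hj
    have hi' : (Function.update v j true) i = false := by
      rw [Function.update_of_ne hij]; exact hi
    rw [hUeq v i hi, hUeq _ _ hj', hUeq v j hj, hUeq _ _ hi']
    have h1 := hf v i j hij hi hj
    have h2 := hg v i j hij hi hj
    set E := eqToHom (congrArg X (Function.update_comm hij.symm true true v)) with hE
    set A := f v j hj ≫ f (Function.update v j true) i hi' with hA
    have hAne : A ≠ 0 := hnz v j i hij.symm hj hi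
    have hAEne : A ≫ E ≠ 0 := by
      intro h0
      apply hAne
      have := congrArg
        (fun m => m ≫ eqToHom (congrArg X (Function.update_comm hij.symm true true v)).symm) h0
      simpa [Category.assoc, eqToHom_trans, eqToHom_refl] using this
    simp only [hu, Linear.smul_comp, Linear.comp_smul, smul_smul] at h2
    rw [h1] at h2
    have h3 : (((u v i hi : R) * u (Function.update v i true) j hj')
        - ((u v j hj : R) * u (Function.update v j true) i hi')) • (A ≫ E) = 0 := by
      rw [smul_neg] at h2
      have h2' := neg_injective h2
      rw [sub_smul, sub_eq_zero, mul_comm ((u v i hi : R)), mul_comm ((u v j hj : R))]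
      exact h2'
    have h4 := htf _ _ _ _ h3 hAEne
    have h5 : ((u v i hi : R) * u (Function.update v i true) j hj')
        = ((u v j hj : R) * u (Function.update v j true) i hi') := sub_eq_zero.mp h4
    exact Units.ext (by rw [Units.val_mul, Units.val_mul]; exact h5)
  refine ⟨cubeEps U, ?_⟩
  intro v i hi
  rw [hu v i hi, cubeEps_update U hsq v i hi, smul_smul, Units.val_mul, hUeq v i hi]
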